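/- Let R be a commutative ring and n ≥ 2. Let v = (v₁, v₂,…,vₙ) and w = (w₁, w₂,…,wₙ) be unimodular rows in Um_n(R) with v₁ + w₁ = 1. Then there exist ε, δ ∈ E_n(R) and elements a₂,…,aₙ ∈ R such that vε = (v₁, a₂,…,aₙ) and wδ = (w₁, a₂,…,aₙ); that is, without changing the first coordinates, v and w can be elementarily transformed so that all their remaining coordinates agree. -/
import Mathlib


/-- A row `v` of length `n` over a commutative ring is *unimodular* if there is a row `w`
with `∑ i, v i * w i = 1`. -/
def IsUnimodular {R : Type*} [CommRing R] {n : ℕ} (v : Fin n → R) : Prop :=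
  ∃ w : Fin n → R, ∑ i, v i * w i = 1

/-- `ε` lies in the elementary group `E_n(R)`, i.e. the (sub)group of `GL_n(R)` generated by
the elementary matrices `e_{ij}(λ) = I + λ E_{ij}` (`i ≠ j`).  Since the generating set is
closed under inverses, this coincides with the multiplicative closure. -/
def IsElementary {R : Type*} [CommRing R] {n : ℕ} (ε : Matrix (Fin n) (Fin n) R) : Prop :=
  ε ∈ Submonoid.closure {M : Matrix (Fin n) (Fin n) R |
    ∃ (i j : Fin n) (c : R), i ≠ j ∧ M = Matrix.transvection i j c}

/-- An `m × n` matrix is right invertible (i.e. lies in `Um_{m,n}(R)`) if it has a right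
inverse. -/
def RightInvertible {R : Type*} [CommRing R] {m n : ℕ} (A : Matrix (Fin m) (Fin n) R) : Prop :=
  ∃ B : Matrix (Fin n) (Fin m) R, A * B = 1

/-- The stable range condition `sr_k(R)`. -/
def SRCond (R : Type*) [CommRing R] (k : ℕ) : Prop :=
  ∀ a : Fin (k + 1) → R, IsUnimodular a →
    ∃ c : Fin k → R, IsUnimodular (fun i : Fin k => a i.castSucc + c i * a (Fin.last k))

section Helpers
variable {R : Type*} [CommRing R] {k : ℕ}

/-- The matrix `1 + ∑ cᵢ E_{0,i+1}`. -/
def Emat (c : Fin k → R) : Matrix (Fin (k+1)) (Fin (k+1)) R :=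
  1 + Matrix.of (fun (i j : Fin (k+1)) => if i = 0 then (Fin.cons 0 c : Fin (k+1) → R) j else 0)

lemma Emat_zero : Emat (0 : Fin k → R) = 1 := by
  ext i j
  have h : (Fin.cons 0 0 : Fin (k+1) → R) j = 0 := by
    refine Fin.cases ?_ ?_ j <;> simp
  simp [Emat, h]

lemma Emat_mul (c d : Fin k → R) : Emat c * Emat d = Emat (c + d) := by
  have hN : (Matrix.of (fun (i j : Fin (k+1)) => if i = 0 then (Fin.cons 0 c : Fin (k+1) → R) j else 0)) *
      (Matrix.of (fun (i j : Fin (k+1)) => if i = 0 then (Fin.cons 0 d : Fin (k+1) → R) j else 0)) = 0 := by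
    ext i j
    simp [Matrix.mul_apply, ite_mul, mul_ite]
  have hcd : ∀ j : Fin (k+1), (Fin.cons 0 c : Fin (k+1) → R) j + (Fin.cons 0 d : Fin (k+1) → R) j
      = (Fin.cons 0 (c + d) : Fin (k+1) → R) j := by
    intro j; refine Fin.cases ?_ ?_ j <;> simp
  simp only [Emat, add_mul, mul_add, one_mul, mul_one, hN, add_zero]
  ext i j
  by_cases hi : i = 0 <;> simp [hi, hcd, add_assoc]

lemma Emat_single (a : Fin k) (x : R) :
    Emat (Pi.single a x) = Matrix.transvection 0 a.succ x := by
  ext i j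
  have h : (Fin.cons 0 (Pi.single a x) : Fin (k+1) → R) j = if j = a.succ then x else 0 := by
    refine Fin.cases ?_ ?_ j
    · simp [(Fin.succ_ne_zero a).symm]
    · intro i; simp [Fin.succ_inj, Pi.single_apply]
  simp only [Emat, Matrix.transvection, Matrix.add_apply, Matrix.of_apply, h,
    Matrix.single]
  by_cases hi : i = 0 <;> by_cases hj : j = a.succ <;> simp [hi, hj, eq_comm]

lemma isElem_Emat (c : Fin k → R) : IsElementary (Emat c) := by
  have key : ∀ s : Finset (Fin k), IsElementary (Emat (fun i => if i ∈ s then c i else 0)) := by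
    intro s
    induction s using Finset.induction with
    | empty =>
        have : (fun i : Fin k => if i ∈ (∅ : Finset (Fin k)) then c i else 0)
            = (0 : Fin k → R) := by ext i; simp
        rw [this, Emat_zero]
        exact Submonoid.one_mem _
    | @insert a s ha ih =>
        have h : (fun i => if i ∈ insert a s then c i else 0)
            = Pi.single a (c a) + fun i => if i ∈ s then c i else 0 := by
          ext i
          by_cases h : i = a
          · subst h; simp [ha]
          · simp [h, Pi.single_apply]
        rw [h, ← Emat_mul, Emat_single]
        exact Submonoid.mul_mem _
          (Submonoid.subset_closure ⟨0, a.succ, c a, (Fin.succ_ne_zero a).symm, rfl⟩) ih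
  have h : (fun i : Fin k => if i ∈ (Finset.univ : Finset (Fin k)) then c i else 0) = c := by
    ext i; simp
  have := key Finset.univ
  rwa [h] at this

lemma vecMul_Emat (v : Fin (k+1) → R) (c : Fin k → R) :
    Matrix.vecMul v (Emat c) = fun j => v j + v 0 * (Fin.cons 0 c : Fin (k+1) → R) j := by
  ext j
  simp [Emat, Matrix.vecMul, dotProduct, mul_ite, mul_add, Finset.sum_add_distrib,
    Matrix.one_apply, ite_mul]

end Helpers

/-- Let `R` be a commutative ring, `n = k + 1 ≥ 2`, and let `v, w ∈ Um_n(R)` with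
`v₁ + w₁ = 1`.  Then, without changing the first coordinates, `v` and `w` can be
elementarily transformed so that all their remaining coordinates agree. -/
theorem equalize_tails_of_first_coords_sum_one {R : Type*} [CommRing R]
    (k : ℕ) (hk : 1 ≤ k) (v w : Fin (k + 1) → R)
    (hv : IsUnimodular v) (hw : IsUnimodular w) (h1 : v 0 + w 0 = 1) :
    ∃ (ε δ : Matrix (Fin (k + 1)) (Fin (k + 1)) R) (a : Fin k → R),
      IsElementary ε ∧ IsElementary δ ∧
      Matrix.vecMul v ε = Fin.cons (v 0) a ∧ Matrix.vecMul w δ = Fin.cons (w 0) a := by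
  refine ⟨Emat (fun i => w i.succ - v i.succ), Emat (fun i => v i.succ - w i.succ),
    fun i => v i.succ + v 0 * (w i.succ - v i.succ), isElem_Emat _, isElem_Emat _, ?_, ?_⟩
  · rw [vecMul_Emat]
    ext j
    refine Fin.cases ?_ ?_ j <;> simp
  · rw [vecMul_Emat]
    ext j
    refine Fin.cases ?_ ?_ j
    · simp
    · intro i
      simp only [Fin.cons_succ]
      linear_combination (v i.succ - w i.succ) * h1
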